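/- Let g be a real Lie algebra and a : I → g* absolutely continuous with a'(t) = −ad*(u(t))(a(t)) for a measurable bounded control u : I → g. Then for any continuous asymmetric norm F on g with dual F* on g*, if u(t) maximizes a(t) on the unit sphere S_F for a.e. t, the function t ↦ F*(a(t)) = a(t)(u(t)) is constant on I. -/

import Mathlib

open MeasureTheory

/-- An asymmetric norm on a real vector space: nonnegative, vanishing only at `0`,
positively homogeneous and subadditive. -/
def IsAsymNorm {V : Type*} [AddCommGroup V] [Module ℝ V] (F : V → ℝ) : Prop :=
  (∀ y, 0 ≤ F y) ∧ (∀ y, F y = 0 ↔ y = 0) ∧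
  (∀ (c : ℝ) (y : V), 0 < c → F (c • y) = c * F y) ∧
  (∀ y w, F (y + w) ≤ F y + F w)

section Aux

variable {E : Type*} [NormedAddCommGroup E] [NormedSpace ℝ E] [FiniteDimensional ℝ E]

private lemma exists_asym_norm_bound (F : E → ℝ) (hFc : Continuous F)
    (hF0 : ∀ y, 0 ≤ F y) (hFz : ∀ y, F y = 0 ↔ y = 0)
    (hFh : ∀ (c : ℝ) (y : E), 0 < c → F (c • y) = c * F y) :
    ∃ K : ℝ, 0 ≤ K ∧ ∀ v, ‖v‖ ≤ K * F v := by
  rcases subsingleton_or_nontrivial E with hE | hE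
  · refine ⟨0, le_rfl, fun v => ?_⟩
    rw [Subsingleton.elim v 0]
    simp
  · have hs : (Metric.sphere (0 : E) 1).Nonempty :=
      NormedSpace.sphere_nonempty.mpr zero_le_one
    obtain ⟨w, hw, hmin⟩ := (isCompact_sphere (0 : E) 1).exists_isMinOn hs hFc.continuousOn
    have hw1 : ‖w‖ = 1 := mem_sphere_zero_iff_norm.mp hw
    have hw0 : w ≠ 0 := by intro h; rw [h, norm_zero] at hw1; norm_num at hw1
    have hm : 0 < F w := lt_of_le_of_ne (hF0 w) (fun h => hw0 ((hFz w).1 h.symm))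
    refine ⟨(F w)⁻¹, inv_nonneg.2 hm.le, fun v => ?_⟩
    rcases eq_or_ne v 0 with rfl | hv
    · simp [(hFz (0 : E)).2 rfl]
    · have hnv : 0 < ‖v‖ := norm_pos_iff.2 hv
      have hmem : ‖v‖⁻¹ • v ∈ Metric.sphere (0 : E) 1 := by
        rw [mem_sphere_zero_iff_norm, norm_smul, norm_inv, norm_norm, inv_mul_cancel₀ hnv.ne']
      have hFv : F v = ‖v‖ * F (‖v‖⁻¹ • v) := by
        rw [← hFh ‖v‖ _ hnv, smul_inv_smul₀ hnv.ne']
      have hge := isMinOn_iff.1 hmin _ hmem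
      calc ‖v‖ = (F w)⁻¹ * (‖v‖ * F w) := by
            rw [mul_comm ‖v‖, ← mul_assoc, inv_mul_cancel₀ hm.ne', one_mul]
        _ ≤ (F w)⁻¹ * (‖v‖ * F (‖v‖⁻¹ • v)) := by
            exact mul_le_mul_of_nonneg_left
              (mul_le_mul_of_nonneg_left hge hnv.le) (inv_nonneg.2 hm.le)
        _ = (F w)⁻¹ * F v := by rw [← hFv]

set_option maxHeartbeats 1000000 in
private theorem aux_const
    (I : Set ℝ) (hI : I.OrdConnected)
    (a : ℝ → (E →L[ℝ] ℝ)) (u : ℝ → E)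
    (β : E →L[ℝ] E →L[ℝ] E) (hβ : ∀ x, β x x = 0)
    (F : E → ℝ) (hFc : Continuous F)
    (hF0 : ∀ y, 0 ≤ F y) (hFz : ∀ y, F y = 0 ↔ y = 0)
    (hFh : ∀ (c : ℝ) (y : E), 0 < c → F (c • y) = c * F y)
    (hub : ∃ C : ℝ, ∀ t ∈ I, F (u t) ≤ C)
    (Fstar : (E →L[ℝ] ℝ) → ℝ)
    (hFstar : ∀ ξ, IsGreatest {r | ∃ v, F v ≤ 1 ∧ ξ v = r} (Fstar ξ))
    (hAC : ∀ x : E, ∀ t₀ ∈ I, ∀ t ∈ I,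
      a t x - a t₀ x = ∫ s in t₀..t, -(a s (β (u s) x)))
    (hmax : ∀ᵐ t ∂volume, t ∈ I →
      (F (u t) = 1 ∧ ∀ v : E, F v = 1 → a t v ≤ a t (u t))) :
    ∀ t₁ ∈ I, ∀ t₂ ∈ I, Fstar (a t₁) = Fstar (a t₂) := by
  obtain ⟨K, hK0, hKF⟩ := exists_asym_norm_bound F hFc hF0 hFz hFh
  -- general facts about Fstar
  have hmem1 : ∀ (ξ : E →L[ℝ] ℝ) (v : E), F v ≤ 1 → ξ v ≤ Fstar ξ :=
    fun ξ v hv => (hFstar ξ).2 ⟨v, hv, rfl⟩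
  have hF00 : F (0 : E) = 0 := (hFz 0).2 rfl
  have hFs0 : ∀ ξ, 0 ≤ Fstar ξ := by
    intro ξ
    have := hmem1 ξ 0 (by rw [hF00]; norm_num)
    simpa using this
  have hpair : ∀ (ξ : E →L[ℝ] ℝ) (v : E), ξ v ≤ Fstar ξ * F v := by
    intro ξ v
    rcases eq_or_ne v 0 with rfl | hv
    · simp [hF00]
    · have hFv : 0 < F v := lt_of_le_of_ne (hF0 v) fun h => hv ((hFz v).1 h.symm)
      have hmem : F ((F v)⁻¹ • v) ≤ 1 := by
        rw [hFh _ _ (inv_pos.2 hFv), inv_mul_cancel₀ hFv.ne']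
      have h1 := hmem1 ξ _ hmem
      rw [ContinuousLinearMap.map_smul, smul_eq_mul] at h1
      have h2 := mul_le_mul_of_nonneg_left h1 hFv.le
      rw [← mul_assoc, mul_inv_cancel₀ hFv.ne', one_mul] at h2
      linarith [h2, mul_comm (F v) (Fstar ξ)]
  have hlips : ∀ ξ η : (E →L[ℝ] ℝ), Fstar ξ - Fstar η ≤ K * ‖ξ - η‖ := by
    intro ξ η
    obtain ⟨⟨v, hv1, hv2⟩, -⟩ := hFstar ξ
    have h1 : η v ≤ Fstar η := hmem1 η v hv1
    have h2 : ‖v‖ ≤ K := (hKF v).trans (by nlinarith [hF0 v])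
    have h3 : (ξ - η) v ≤ ‖ξ - η‖ * ‖v‖ :=
      (le_abs_self _).trans ((ξ - η).le_opNorm v)
    have h4 : Fstar ξ = η v + (ξ - η) v := by
      rw [← hv2]; simp [ContinuousLinearMap.sub_apply]
    nlinarith [norm_nonneg (ξ - η)]
  -- value at a maximizing control
  have hgoodeq : ∀ t, F (u t) = 1 → (∀ v, F v = 1 → a t v ≤ a t (u t)) →
      Fstar (a t) = a t (u t) := by
    intro t h1 h2
    have hnn : 0 ≤ a t (u t) := by
      by_contra hneg
      push_neg at hneg
      have hu0 : u t ≠ 0 := by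
        intro h; rw [h, hF00] at h1; norm_num at h1
      have hnu : -(u t) ≠ 0 := neg_ne_zero.2 hu0
      have hFnu : 0 < F (-(u t)) :=
        lt_of_le_of_ne (hF0 _) fun h => hnu ((hFz _).1 h.symm)
      have hw : F ((F (-(u t)))⁻¹ • (-(u t))) = 1 := by
        rw [hFh _ _ (inv_pos.2 hFnu), inv_mul_cancel₀ hFnu.ne']
      have h3 := h2 _ hw
      rw [ContinuousLinearMap.map_smul, map_neg, smul_eq_mul] at h3
      nlinarith [inv_pos.2 hFnu]
    apply (hFstar (a t)).unique
    constructor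
    · exact ⟨u t, h1.le, rfl⟩
    · rintro r ⟨v, hv, rfl⟩
      rcases eq_or_ne v 0 with rfl | hv0
      · simpa using hnn
      · have hFv : 0 < F v := lt_of_le_of_ne (hF0 v) fun h => hv0 ((hFz v).1 h.symm)
        have hvs : F ((F v)⁻¹ • v) = 1 := by
          rw [hFh _ _ (inv_pos.2 hFv), inv_mul_cancel₀ hFv.ne']
        have h3 := h2 _ hvs
        rw [ContinuousLinearMap.map_smul, smul_eq_mul] at h3
        have h4 := mul_le_mul_of_nonneg_left h3 hFv.le
        rw [← mul_assoc, mul_inv_cancel₀ hFv.ne', one_mul] at h4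
        nlinarith
  suffices key : ∀ t₁, t₁ ∈ I → ∀ t₂, t₂ ∈ I → t₁ < t₂ → Fstar (a t₁) = Fstar (a t₂) by
    intro t₁ h₁ t₂ h₂
    rcases lt_trichotomy t₁ t₂ with h | h | h
    · exact key _ h₁ _ h₂ h
    · rw [h]
    · exact (key _ h₂ _ h₁ h).symm
  intro t₁ ht₁ t₂ ht₂ hlt
  have hIcc : Set.Icc t₁ t₂ ⊆ I := hI.out ht₁ ht₂
  set ψ : E → ℝ → ℝ := fun x s => -(a s (β (u s) x)) with hψdef
  -- dichotomy: either `a · x` is constant for all x, or all `ψ x` are interval integrable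
  have hcover : ∀ x : E, (∀ t ∈ Set.Icc t₁ t₂, a t x = a t₁ x) ∨
      IntervalIntegrable (ψ x) volume t₁ t₂ := by
    intro x
    by_cases hV : IntervalIntegrable (ψ x) volume t₁ t₂
    · exact Or.inr hV
    · left
      have h12 : a t₂ x = a t₁ x := by
        have h := hAC x t₁ ht₁ t₂ ht₂
        rw [intervalIntegral.integral_undef hV] at h
        linarith
      intro t ht
      have htI := hIcc ht
      by_cases hP : IntervalIntegrable (ψ x) volume t₁ t
      · have hQ : ¬ IntervalIntegrable (ψ x) volume t t₂ := fun hQ => hV (hP.trans hQ)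
        have h := hAC x t htI t₂ ht₂
        rw [intervalIntegral.integral_undef hQ] at h
        linarith
      · have h := hAC x t₁ ht₁ t htI
        rw [intervalIntegral.integral_undef hP] at h
        linarith
  have hdicho : (∀ x : E, ∀ t ∈ Set.Icc t₁ t₂, a t x = a t₁ x) ∨
      (∀ x : E, IntervalIntegrable (ψ x) volume t₁ t₂) := by
    by_cases hW : ∀ x : E, ∀ t ∈ Set.Icc t₁ t₂, a t x = a t₁ x
    · exact Or.inl hW
    · right
      push_neg at hW
      obtain ⟨x₀, t₀, ht₀, hx₀⟩ := hW
      have hx₀V : IntervalIntegrable (ψ x₀) volume t₁ t₂ := by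
        rcases hcover x₀ with h | h
        · exact absurd (h t₀ ht₀) hx₀
        · exact h
      intro y
      rcases hcover y with hyW | hyV
      · rcases hcover (x₀ + y) with hW2 | hV2
        · exfalso
          apply hx₀
          have h1 := hW2 t₀ ht₀
          have h2 := hyW t₀ ht₀
          simp only [map_add] at h1
          linarith
        · have hsub : IntervalIntegrable (fun s => ψ (x₀ + y) s - ψ x₀ s) volume t₁ t₂ :=
            hV2.sub hx₀V
          have heq : (fun s => ψ (x₀ + y) s - ψ x₀ s) = ψ y := by
            funext s
            simp only [hψdef, map_add]
            ring
          rwa [heq] at hsub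
      · exact hyV
  rcases hdicho with hW | hV
  · have : a t₂ = a t₁ := ContinuousLinearMap.ext fun x => hW x t₂ ⟨hlt.le, le_refl t₂⟩
    rw [this]
  -- main case : everything is integrable
  obtain ⟨C, hC⟩ := hub
  have hC0 : 0 ≤ C := le_trans (hF0 _) (hC t₁ ht₁)
  set A : ℝ → (E →L[ℝ] ℝ) := fun s => -((a s).comp (β (u s))) with hAdef
  have hAapp : ∀ s x, A s x = ψ x s := fun s x => rfl
  have hAint : IntervalIntegrable A volume t₁ t₂ := by
    classical
    set b := Module.finBasis ℝ E with hb
    set c : Fin (Module.finrank ℝ E) → (E →L[ℝ] ℝ) :=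
      fun i => LinearMap.toContinuousLinearMap (b.coord i) with hc
    have hdual : ∀ (φ : E →L[ℝ] ℝ), φ = ∑ i, φ (b i) • c i := by
      intro φ
      apply ContinuousLinearMap.coe_injective
      apply b.ext
      intro i
      simp [hc, Module.Basis.coord_apply, Finsupp.single_apply]
    have hrepr : A = fun s => ∑ i, ψ (b i) s • c i := by
      funext s
      rw [hdual (A s)]
      simp only [hAapp]
    rw [hrepr]
    have hsum := IntervalIntegrable.sum (μ := volume) (a := t₁) (b := t₂) Finset.univ
      (f := fun i => fun s => ψ (b i) s • c i) ?_
    · refine Eq.subst (motive := fun G => IntervalIntegrable G volume t₁ t₂) ?_ hsum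
      funext s
      simp
    · intro i _
      exact ⟨((hV (b i)).1).smul_const (c i), ((hV (b i)).2).smul_const (c i)⟩
  have hsubII : ∀ s ∈ Set.Icc t₁ t₂, ∀ t ∈ Set.Icc t₁ t₂,
      IntervalIntegrable A volume s t := by
    intro s hs t ht
    apply hAint.mono_set
    rw [Set.uIcc_of_le hlt.le]
    exact Set.ordConnected_Icc.uIcc_subset hs ht
  have hrep : ∀ s ∈ Set.Icc t₁ t₂, ∀ t ∈ Set.Icc t₁ t₂,
      a t - a s = ∫ q in s..t, A q := by
    intro s hs t ht
    apply ContinuousLinearMap.ext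
    intro x
    rw [ContinuousLinearMap.sub_apply,
      ContinuousLinearMap.intervalIntegral_apply (hsubII s hs t ht) x]
    exact hAC x s (hIcc hs) t (hIcc ht)
  -- uniform bound for A on [t₁, t₂]
  have hAnorm_int : IntervalIntegrable (fun q => ‖A q‖) volume t₁ t₂ := hAint.norm
  set R : ℝ := ‖a t₁‖ + ∫ q in t₁..t₂, ‖A q‖ with hRdef
  have haR : ∀ q ∈ Set.Icc t₁ t₂, ‖a q‖ ≤ R := by
    intro q hq
    have h1 : a q - a t₁ = ∫ p in t₁..q, A p := hrep t₁ ⟨le_refl _, hlt.le⟩ q hq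
    have h2 : ‖a q - a t₁‖ ≤ ∫ p in t₁..q, ‖A p‖ := by
      rw [h1]; exact intervalIntegral.norm_integral_le_integral_norm hq.1
    have h3 : (∫ p in t₁..q, ‖A p‖) ≤ ∫ p in t₁..t₂, ‖A p‖ := by
      apply intervalIntegral.integral_mono_interval (le_refl t₁) hq.1 hq.2
        (Filter.Eventually.of_forall fun x => norm_nonneg _) hAnorm_int
    have h4 : ‖a q‖ ≤ ‖a t₁‖ + ‖a q - a t₁‖ := by
      have := norm_add_le (a t₁) (a q - a t₁)
      simpa using this
    rw [hRdef]
    linarith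
  set Cu : ℝ := K * C with hCudef
  have hu_bound : ∀ q ∈ I, ‖u q‖ ≤ Cu :=
    fun q hq => (hKF (u q)).trans (mul_le_mul_of_nonneg_left (hC q hq) hK0)
  have hCu0 : 0 ≤ Cu := mul_nonneg hK0 hC0
  have hR0 : 0 ≤ R := by
    have := norm_nonneg (a t₁)
    have h2 : 0 ≤ ∫ q in t₁..t₂, ‖A q‖ :=
      intervalIntegral.integral_nonneg hlt.le (fun x _ => norm_nonneg _)
    rw [hRdef]; linarith
  set M : ℝ := R * (‖β‖ * Cu) with hMdef
  have hM0 : 0 ≤ M := mul_nonneg hR0 (mul_nonneg (ContinuousLinearMap.opNorm_nonneg β) hCu0)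
  have hMA : ∀ q ∈ Set.Icc t₁ t₂, ‖A q‖ ≤ M := by
    intro q hq
    have h1 : ‖A q‖ = ‖(a q).comp (β (u q))‖ := norm_neg _
    rw [h1, hMdef]
    calc ‖(a q).comp (β (u q))‖ ≤ ‖a q‖ * ‖β (u q)‖ :=
          ContinuousLinearMap.opNorm_comp_le _ _
      _ ≤ R * (‖β‖ * Cu) := by
          apply mul_le_mul (haR q hq) ?_ (norm_nonneg _) hR0
          calc ‖β (u q)‖ ≤ ‖β‖ * ‖u q‖ := β.le_opNorm _
            _ ≤ ‖β‖ * Cu := mul_le_mul_of_nonneg_left (hu_bound q (hIcc hq)) (norm_nonneg β)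
  -- h is Lipschitz on [t₁, t₂]
  set h : ℝ → ℝ := fun t => Fstar (a t) with hhdef
  have hLip : LipschitzOnWith (Real.toNNReal (K * M)) h (Set.Icc t₁ t₂) := by
    rw [lipschitzOnWith_iff_dist_le_mul]
    intro x hx y hy
    have hxy : ‖a x - a y‖ ≤ M * |x - y| := by
      rw [hrep y hy x hx]
      have hbd : ∀ q ∈ Set.uIoc y x, ‖A q‖ ≤ M := by
        intro q hq
        apply hMA
        have hsub : Set.uIoc y x ⊆ Set.Icc t₁ t₂ :=
          le_trans Set.Ioc_subset_Icc_self (Set.ordConnected_Icc.uIcc_subset hy hx)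
        exact hsub hq
      have := intervalIntegral.norm_integral_le_of_norm_le_const (C := M)
        (f := A) (a := y) (b := x) hbd
      simpa [abs_sub_comm] using this
    have hxy' : ‖a y - a x‖ ≤ M * |x - y| := by
      rw [norm_sub_rev]; exact hxy
    have hb1 : Fstar (a x) - Fstar (a y) ≤ K * (M * |x - y|) :=
      le_trans (hlips (a x) (a y)) (mul_le_mul_of_nonneg_left hxy hK0)
    have hb2 : Fstar (a y) - Fstar (a x) ≤ K * (M * |x - y|) :=
      le_trans (hlips (a y) (a x)) (mul_le_mul_of_nonneg_left hxy' hK0)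
    rw [Real.dist_eq, Real.dist_eq, Real.coe_toNNReal _ (mul_nonneg hK0 hM0),
      abs_sub_le_iff]
    constructor <;> simp only [hhdef] <;> nlinarith [abs_nonneg (x - y)]
  obtain ⟨H, hHlip, hHeq⟩ := hLip.extend_real
  -- the indicator modification of A, globally integrable
  set f : ℝ → (E →L[ℝ] ℝ) := (Set.Ioc t₁ t₂).indicator A with hfdef
  have hfint : Integrable f volume := by
    rw [hfdef]
    exact (integrable_indicator_iff measurableSet_Ioc).2 hAint.1
  have hLeb := IsUnifLocDoublingMeasure.ae_tendsto_average_norm_sub (μ := volume)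
    hfint.locallyIntegrable 1
  have hIooIcc : Set.Ioo t₁ t₂ ⊆ Set.Icc t₁ t₂ := Set.Ioo_subset_Icc_self
  -- almost everywhere, H has derivative 0 on Ioo
  have hae : ∀ᵐ t ∂volume, t ∈ Set.Ioo t₁ t₂ → HasDerivAt H 0 t := by
    filter_upwards [hmax, hHlip.ae_differentiableAt (μ := volume), hLeb]
      with t hgood hdiff hleb htIoo
    have htIcc : t ∈ Set.Icc t₁ t₂ := hIooIcc htIoo
    obtain ⟨hFu1, humax⟩ := hgood (hIcc htIcc)
    have hht : h t = a t (u t) := hgoodeq t hFu1 humax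
    have hphile : ∀ s, a s (u t) ≤ h s := by
      intro s
      have := hpair (a s) (u t)
      rwa [hFu1, mul_one] at this
    have hft : f t = A t := by
      rw [hfdef]
      exact Set.indicator_of_mem (Set.mem_Ioc.mpr ⟨htIoo.1, htIoo.2.le⟩) A
    have hfut : f t (u t) = 0 := by
      rw [hft]
      show -((a t).comp (β (u t))) (u t) = 0
      simp [hβ]
    -- the comparison function s ↦ a s (u t) has derivative 0 within Ioo at t
    have hphi : HasDerivWithinAt (fun s => a s (u t)) 0 (Set.Ioo t₁ t₂) t := by
      rw [hasDerivWithinAt_iff_tendsto_slope]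
      set g : ℝ → ℝ := fun s =>
        2 * ‖u t‖ * ⨍ y in Metric.closedBall t |s - t|, ‖f y - f t‖ with hgdef
      have hδ : Filter.Tendsto (fun s => |s - t|)
          (nhdsWithin t (Set.Ioo t₁ t₂ \ {t})) (nhdsWithin 0 (Set.Ioi 0)) := by
        rw [tendsto_nhdsWithin_iff]
        constructor
        · have h1 : Filter.Tendsto (fun s => |s - t|) (nhds t) (nhds 0) := by
            have := ((continuous_id.sub (continuous_const (y := t))).abs).tendsto t
            simpa using this
          exact h1.mono_left nhdsWithin_le_nhds
        · filter_upwards [self_mem_nhdsWithin] with s hs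
          have : s ≠ t := by simpa using hs.2
          exact abs_pos.2 (sub_ne_zero.2 this)
      have havg : Filter.Tendsto
          (fun s => ⨍ y in Metric.closedBall t |s - t|, ‖f y - f t‖)
          (nhdsWithin t (Set.Ioo t₁ t₂ \ {t})) (nhds 0) := by
        apply hleb (fun _ => t) (fun s => |s - t|) hδ
        filter_upwards with s
        exact Metric.mem_closedBall_self (by positivity)
      have hgt : Filter.Tendsto g (nhdsWithin t (Set.Ioo t₁ t₂ \ {t})) (nhds 0) := by
        have := havg.const_mul (2 * ‖u t‖)
        simpa [hgdef] using this
      apply squeeze_zero_norm' ?_ hgt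
      filter_upwards [self_mem_nhdsWithin] with s hs
      obtain ⟨hsIoo, hsne⟩ := hs
      have hsne' : s ≠ t := by simpa using hsne
      have hr0 : 0 < |s - t| := abs_pos.2 (sub_ne_zero.2 hsne')
      have hstep1 : a s (u t) - a t (u t) = ∫ q in t..s, f q (u t) := by
        have h1 : a s - a t = ∫ q in t..s, A q := hrep t htIcc s (hIooIcc hsIoo)
        have h2 : a s (u t) - a t (u t) = (∫ q in t..s, A q) (u t) := by
          rw [← h1]; simp
        rw [h2, ContinuousLinearMap.intervalIntegral_apply
          (hsubII t htIcc s (hIooIcc hsIoo)) (u t)]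
        apply intervalIntegral.integral_congr
        intro q hq
        have hq' : q ∈ Set.Ioc t₁ t₂ := by
          have hsub : Set.uIcc t s ⊆ Set.Ioo t₁ t₂ :=
            Set.ordConnected_Ioo.uIcc_subset htIoo hsIoo
          exact ⟨(hsub hq).1, (hsub hq).2.le⟩
        simp [hfdef, Set.indicator_of_mem hq']
      have hIsub : Set.uIoc t s ⊆ Metric.closedBall t |s - t| := by
        intro q hq
        rw [Metric.mem_closedBall, Real.dist_eq]
        have h1 : min t s < q := hq.1
        have h2 : q ≤ max t s := hq.2
        have h3 : min t s ≤ t := min_le_left t s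
        have h4 : t ≤ max t s := le_max_left t s
        have h5 : max t s - min t s = |s - t| := max_sub_min_eq_abs t s
        rw [abs_le]
        constructor <;> linarith
      have hfappInt : Integrable (fun q => f q (u t)) volume :=
        hfint.apply_continuousLinearMap (u t)
      have hball_int : IntegrableOn (fun q => ‖f q - f t‖ * ‖u t‖)
          (Metric.closedBall t |s - t|) volume := by
        apply Integrable.mul_const
        apply Integrable.norm
        exact hfint.integrableOn.sub
          (integrableOn_const measure_closedBall_lt_top.ne)
      have hstep2 : |∫ q in t..s, f q (u t)| ≤
          (∫ y in Metric.closedBall t |s - t|, ‖f y - f t‖) * ‖u t‖ := by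
        calc |∫ q in t..s, f q (u t)| ≤ ∫ q in Set.uIoc t s, ‖f q (u t)‖ := by
              simpa using intervalIntegral.norm_integral_le_integral_norm_uIoc
                (f := fun q => f q (u t)) (a := t) (b := s) (μ := volume)
          _ ≤ ∫ q in Set.uIoc t s, ‖f q - f t‖ * ‖u t‖ := by
              apply setIntegral_mono_on
              · exact hfappInt.norm.integrableOn
              · exact hball_int.mono_set hIsub
              · exact measurableSet_uIoc
              · intro q hq
                have heq : f q (u t) = (f q - f t) (u t) := by
                  simp [hfut]
                rw [heq]
                exact (f q - f t).le_opNorm (u t)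
          _ ≤ ∫ q in Metric.closedBall t |s - t|, ‖f q - f t‖ * ‖u t‖ := by
              apply setIntegral_mono_set hball_int
              · exact Filter.Eventually.of_forall fun x =>
                  mul_nonneg (norm_nonneg _) (norm_nonneg _)
              · exact Filter.Eventually.of_forall (fun x hx => hIsub hx)
          _ = (∫ y in Metric.closedBall t |s - t|, ‖f y - f t‖) * ‖u t‖ :=
              integral_mul_const _ _
      have hvol : (volume (Metric.closedBall t |s - t|)).toReal = 2 * |s - t| := by
        rw [Real.volume_closedBall]
        exact ENNReal.toReal_ofReal (by positivity)
      have hint_avg : (∫ y in Metric.closedBall t |s - t|, ‖f y - f t‖) =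
          (2 * |s - t|) * ⨍ y in Metric.closedBall t |s - t|, ‖f y - f t‖ := by
        rw [setAverage_eq, measureReal_def, hvol, smul_eq_mul, ← mul_assoc,
          mul_inv_cancel₀ (by positivity), one_mul]
      show ‖slope (fun s => a s (u t)) t s‖ ≤ g s
      rw [slope_def_field, Real.norm_eq_abs, abs_div]
      rw [div_le_iff₀ hr0]
      calc |a s (u t) - a t (u t)| ≤
            (2 * |s - t|) * (⨍ y in Metric.closedBall t |s - t|, ‖f y - f t‖) * ‖u t‖ := by
            rw [hstep1]
            calc |∫ q in t..s, f q (u t)| ≤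
                (∫ y in Metric.closedBall t |s - t|, ‖f y - f t‖) * ‖u t‖ := hstep2
              _ = _ := by rw [hint_avg]
        _ = g s * |s - t| := by rw [hgdef]; ring
    -- trap the derivative of H between slopes
    have hd := hdiff.hasDerivAt
    have hmemIoo : Set.Ioo t₁ t₂ ∈ nhds t := isOpen_Ioo.mem_nhds htIoo
    have hφH : ∀ s ∈ Set.Icc t₁ t₂, a s (u t) ≤ H s :=
      fun s hs => (hphile s).trans_eq (hHeq hs)
    have hφHt : a t (u t) = H t := by rw [← hht]; exact hHeq htIcc
    have hslopeH : Filter.Tendsto (slope H t) (nhdsWithin t {t}ᶜ) (nhds (deriv H t)) :=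
      hasDerivAt_iff_tendsto_slope.1 hd
    have hslopeφ : Filter.Tendsto (slope (fun s => a s (u t)) t)
        (nhdsWithin t (Set.Ioo t₁ t₂ \ {t})) (nhds 0) :=
      hasDerivWithinAt_iff_tendsto_slope.1 hphi
    have hle1 : nhdsWithin t (Set.Ioi t) ≤ nhdsWithin t (Set.Ioo t₁ t₂ \ {t}) := by
      rw [nhdsWithin_le_iff]
      apply Filter.mem_of_superset
        (Filter.inter_mem (mem_nhdsWithin_of_mem_nhds hmemIoo) self_mem_nhdsWithin)
      intro s hs
      exact ⟨hs.1, by simpa using (ne_of_gt hs.2)⟩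
    have hle1' : nhdsWithin t (Set.Ioi t) ≤ nhdsWithin t {t}ᶜ :=
      nhdsWithin_mono t (fun s hs => by simpa using (ne_of_gt hs))
    have hle2 : nhdsWithin t (Set.Iio t) ≤ nhdsWithin t (Set.Ioo t₁ t₂ \ {t}) := by
      rw [nhdsWithin_le_iff]
      apply Filter.mem_of_superset
        (Filter.inter_mem (mem_nhdsWithin_of_mem_nhds hmemIoo) self_mem_nhdsWithin)
      intro s hs
      exact ⟨hs.1, by simpa using (ne_of_lt hs.2)⟩
    have hle2' : nhdsWithin t (Set.Iio t) ≤ nhdsWithin t {t}ᶜ :=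
      nhdsWithin_mono t (fun s hs => by simpa using (ne_of_lt hs))
    have hpos : 0 ≤ deriv H t := by
      apply le_of_tendsto_of_tendsto (hslopeφ.mono_left hle1) (hslopeH.mono_left hle1')
      filter_upwards [hle1 self_mem_nhdsWithin, self_mem_nhdsWithin] with s hs1 hs2
      rw [slope_def_field, slope_def_field]
      have hst : 0 < s - t := sub_pos.2 hs2
      rw [div_le_div_iff₀ hst hst]
      have hHs : a s (u t) ≤ H s := hφH s (hIooIcc hs1.1)
      nlinarith [hφHt]
    have hneg : deriv H t ≤ 0 := by
      apply le_of_tendsto_of_tendsto (hslopeH.mono_left hle2') (hslopeφ.mono_left hle2)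
      filter_upwards [hle2 self_mem_nhdsWithin, self_mem_nhdsWithin] with s hs1 hs2
      rw [slope_def_field, slope_def_field]
      have hst : s - t < 0 := sub_neg.2 hs2
      rw [div_le_div_right_of_neg hst]
      have hHs : a s (u t) ≤ H s := hφH s (hIooIcc hs1.1)
      nlinarith [hφHt]
    have hzero : deriv H t = 0 := le_antisymm hneg hpos
    rw [← hzero]
    exact hd
  -- from a.e. zero derivative and Lipschitz continuity, conclude H t₁ = H t₂
  set N : Set ℝ := {s | s ∈ Set.Ioo t₁ t₂ ∧ ¬ HasDerivAt H 0 s} with hNdef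
  have hN0 : volume N = 0 := by
    rw [MeasureTheory.ae_iff] at hae
    apply measure_mono_null ?_ hae
    intro s hs
    simp only [Set.mem_setOf_eq]
    intro himp
    exact hs.2 (himp hs.1)
  obtain ⟨N', hNN', hN'm, hN'0⟩ := exists_measurable_superset_of_null hN0
  set s₀ : Set ℝ := Set.Ioo t₁ t₂ \ N' with hs₀def
  have hs₀m : MeasurableSet s₀ := measurableSet_Ioo.diff hN'm
  have hder : ∀ x ∈ s₀, HasFDerivWithinAt H (0 : ℝ →L[ℝ] ℝ) s₀ x := by
    intro x hx
    have hx0 : HasDerivAt H 0 x := by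
      by_contra hc
      exact hx.2 (hNN' ⟨hx.1, hc⟩)
    have h2 : HasFDerivAt H (ContinuousLinearMap.smulRight (1 : ℝ →L[ℝ] ℝ) (0 : ℝ)) x := hx0
    have h3 : (ContinuousLinearMap.smulRight (1 : ℝ →L[ℝ] ℝ) (0 : ℝ)) = 0 := by
      ext; simp
    rw [h3] at h2
    exact h2.hasFDerivWithinAt
  have himg0 : volume (H '' s₀) = 0 := by
    have hb := addHaar_image_le_lintegral_abs_det_fderiv volume hs₀m
      (f' := fun _ => (0 : ℝ →L[ℝ] ℝ)) hder
    have hdet : (0 : ℝ →L[ℝ] ℝ).det = 0 := by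
      show LinearMap.det ((0 : ℝ →L[ℝ] ℝ) : ℝ →ₗ[ℝ] ℝ) = 0
      rw [ContinuousLinearMap.coe_zero, LinearMap.det_zero]
      simp
    refine le_antisymm ?_ zero_le
    calc volume (H '' s₀) ≤ ∫⁻ x in s₀, ENNReal.ofReal |((0 : ℝ →L[ℝ] ℝ)).det| := hb
      _ = 0 := by simp [hdet]
  have himg1 : volume (H '' (Set.Ioo t₁ t₂ ∩ N')) = 0 := by
    have h1 := hHlip.hausdorffMeasure_image_le (by norm_num : (0:ℝ) ≤ 1)
      (Set.Ioo t₁ t₂ ∩ N')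
    rw [MeasureTheory.hausdorffMeasure_real] at h1
    have h2 : volume (Set.Ioo t₁ t₂ ∩ N') = 0 :=
      measure_mono_null Set.inter_subset_right hN'0
    rw [h2, mul_zero] at h1
    exact le_antisymm h1 zero_le
  have himgIoo : volume (H '' Set.Ioo t₁ t₂) = 0 := by
    have hsub : H '' Set.Ioo t₁ t₂ ⊆ H '' s₀ ∪ H '' (Set.Ioo t₁ t₂ ∩ N') := by
      rw [← Set.image_union]
      apply Set.image_mono
      intro x hx
      by_cases hxN : x ∈ N'
      · exact Or.inr ⟨hx, hxN⟩
      · exact Or.inl ⟨hx, hxN⟩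
    apply measure_mono_null hsub
    exact measure_union_null himg0 himg1
  have hH1 : H t₁ = h t₁ := (hHeq ⟨le_refl t₁, hlt.le⟩).symm
  have hH2 : H t₂ = h t₂ := (hHeq ⟨hlt.le, le_refl t₂⟩).symm
  have hcont : ContinuousOn H (Set.Icc t₁ t₂) := hHlip.continuous.continuousOn
  by_contra hne
  have hne' : h t₁ ≠ h t₂ := hne
  rcases hne'.lt_or_gt with hlt2 | hlt2
  · have hsub2 : Set.Ioo (H t₁) (H t₂) ⊆ H '' Set.Ioo t₁ t₂ :=
      intermediate_value_Ioo hlt.le hcont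
    have hv0 : volume (Set.Ioo (H t₁) (H t₂)) = 0 := measure_mono_null hsub2 himgIoo
    rw [Real.volume_Ioo] at hv0
    have : H t₂ - H t₁ ≤ 0 := by
      by_contra hpos
      push_neg at hpos
      rw [ENNReal.ofReal_eq_zero] at hv0
      linarith
    rw [hH1, hH2] at this
    linarith
  · have hsub2 : Set.Ioo (H t₂) (H t₁) ⊆ H '' Set.Ioo t₁ t₂ :=
      intermediate_value_Ioo' hlt.le hcont
    have hv0 : volume (Set.Ioo (H t₂) (H t₁)) = 0 := measure_mono_null hsub2 himgIoo
    rw [Real.volume_Ioo] at hv0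
    have : H t₁ - H t₂ ≤ 0 := by
      by_contra hpos
      push_neg at hpos
      rw [ENNReal.ofReal_eq_zero] at hv0
      linarith
    rw [hH1, hH2] at this
    linarith

end Aux

set_option maxHeartbeats 1000000 in
/-- Along an absolutely continuous solution of the Euler–Arnold equation
`a'(t) = -ad*(u(t))(a(t))` whose control `u(t)` maximizes `a(t)` on the unit sphere
of a continuous asymmetric norm `F` a.e., the dual norm `F*(a(t))` is constant. -/
theorem dual_norm_constant_along_extremal
    {g : Type*} [LieRing g] [LieAlgebra ℝ g] [FiniteDimensional ℝ g]
    [TopologicalSpace g] [IsTopologicalAddGroup g] [ContinuousSMul ℝ g] [T2Space g]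
    [MeasurableSpace g]
    (I : Set ℝ) (hI : I.OrdConnected)
    (a : ℝ → Module.Dual ℝ g) (u : ℝ → g) (hu : Measurable u)
    (F : g → ℝ) (hFc : Continuous F) (hF : IsAsymNorm F)
    (hub : ∃ C : ℝ, ∀ t ∈ I, F (u t) ≤ C)
    (Fstar : Module.Dual ℝ g → ℝ)
    (hFstar : ∀ ξ : Module.Dual ℝ g,
      IsGreatest {r | ∃ v, F v ≤ 1 ∧ ξ v = r} (Fstar ξ))
    (hAC : ∀ x : g, ∀ t₀ ∈ I, ∀ t ∈ I,
      a t x - a t₀ x = ∫ s in t₀..t, -(a s ⁅u s, x⁆))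
    (hmax : ∀ᵐ t ∂volume, t ∈ I →
      (F (u t) = 1 ∧ ∀ v : g, F v = 1 → a t v ≤ a t (u t))) :
    ∀ t₁ ∈ I, ∀ t₂ ∈ I, Fstar (a t₁) = Fstar (a t₂) := by
  classical
  obtain ⟨hF0, hFz, hFh, -⟩ := hF
  set n := Module.finrank ℝ g with hn
  set b : Module.Basis (Fin n) ℝ g := Module.finBasis ℝ g with hb
  set e : g ≃L[ℝ] (Fin n → ℝ) := b.equivFunL with he
  set a' : ℝ → ((Fin n → ℝ) →L[ℝ] ℝ) := fun t =>
    LinearMap.toContinuousLinearMap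
      ((a t).comp ((e.symm : (Fin n → ℝ) →L[ℝ] g) : (Fin n → ℝ) →ₗ[ℝ] g)) with ha'
  have ha'app : ∀ t x, a' t x = a t (e.symm x) := fun t x => by
    simp [ha']
  set u' : ℝ → (Fin n → ℝ) := fun t => e (u t) with hu'
  set β₀ : (Fin n → ℝ) →ₗ[ℝ] (Fin n → ℝ) →ₗ[ℝ] (Fin n → ℝ) :=
    LinearMap.mk₂ ℝ (fun x y => e ⁅e.symm x, e.symm y⁆)
      (fun x x' y => by simp [add_lie])
      (fun c x y => by simp [smul_lie])
      (fun x y y' => by simp [lie_add])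
      (fun c x y => by simp [lie_smul]) with hβ₀
  set β₁ : (Fin n → ℝ) →ₗ[ℝ] ((Fin n → ℝ) →L[ℝ] (Fin n → ℝ)) :=
    (LinearMap.toContinuousLinearMap :
      ((Fin n → ℝ) →ₗ[ℝ] (Fin n → ℝ)) ≃ₗ[ℝ] ((Fin n → ℝ) →L[ℝ] (Fin n → ℝ))).toLinearMap.comp β₀
    with hβ₁
  set β : (Fin n → ℝ) →L[ℝ] (Fin n → ℝ) →L[ℝ] (Fin n → ℝ) :=
    LinearMap.toContinuousLinearMap β₁ with hβdef
  have hβapp : ∀ x y, β x y = e ⁅e.symm x, e.symm y⁆ := fun x y => by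
    simp [hβdef, hβ₁, hβ₀]
  have hβ : ∀ x, β x x = 0 := fun x => by
    rw [hβapp]; simp
  set F' : (Fin n → ℝ) → ℝ := fun v => F (e.symm v) with hF'
  set Fstar' : ((Fin n → ℝ) →L[ℝ] ℝ) → ℝ := fun ξ =>
    Fstar (ξ.toLinearMap.comp ((e : g →L[ℝ] (Fin n → ℝ)).toLinearMap)) with hFstar'def
  have hFseq : ∀ t, Fstar' (a' t) = Fstar (a t) := by
    intro t
    have hcomp : ((a' t).toLinearMap.comp ((e : g →L[ℝ] (Fin n → ℝ)).toLinearMap)) = a t := by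
      apply LinearMap.ext
      intro v
      simp [ha'app]
    show Fstar ((a' t).toLinearMap.comp ((e : g →L[ℝ] (Fin n → ℝ)).toLinearMap)) = Fstar (a t)
    rw [hcomp]
  have hF'c : Continuous F' := hFc.comp e.symm.continuous
  have hF'0 : ∀ y, 0 ≤ F' y := fun y => hF0 _
  have hF'z : ∀ y, F' y = 0 ↔ y = 0 := by
    intro y
    rw [hF']
    constructor
    · intro hy
      have : e.symm y = 0 := (hFz _).1 hy
      have := congrArg e this
      simpa using this
    · intro hy
      rw [hy]
      simpa using (hFz (0 : g)).2 rfl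
  have hF'h : ∀ (c : ℝ) (y : Fin n → ℝ), 0 < c → F' (c • y) = c * F' y := by
    intro c y hc
    show F (e.symm (c • y)) = c * F (e.symm y)
    rw [ContinuousLinearEquiv.map_smul]
    exact hFh c _ hc
  have hub' : ∃ C : ℝ, ∀ t ∈ I, F' (u' t) ≤ C := by
    obtain ⟨C, hC⟩ := hub
    exact ⟨C, fun t ht => by simpa [hF', hu'] using hC t ht⟩
  have hFstar'good : ∀ ξ, IsGreatest {r | ∃ v, F' v ≤ 1 ∧ ξ v = r} (Fstar' ξ) := by
    intro ξ
    have hG := hFstar (ξ.toLinearMap.comp ((e : g →L[ℝ] (Fin n → ℝ)).toLinearMap))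
    have hset : {r | ∃ v, F v ≤ 1 ∧ (ξ.toLinearMap.comp
        ((e : g →L[ℝ] (Fin n → ℝ)).toLinearMap)) v = r} = {r | ∃ v, F' v ≤ 1 ∧ ξ v = r} := by
      ext r
      constructor
      · rintro ⟨v, hv1, hv2⟩
        exact ⟨e v, by simpa [hF'] using hv1, by simpa using hv2⟩
      · rintro ⟨v, hv1, hv2⟩
        refine ⟨e.symm v, by simpa [hF'] using hv1, by simpa using hv2⟩
    rw [hFstar'def]
    rw [hset] at hG
    exact hG
  have hAC' : ∀ x : Fin n → ℝ, ∀ t₀ ∈ I, ∀ t ∈ I,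
      a' t x - a' t₀ x = ∫ s in t₀..t, -(a' s (β (u' s) x)) := by
    intro x t₀ ht₀ t ht
    have hAC0 := hAC (e.symm x) t₀ ht₀ t ht
    rw [ha'app, ha'app]
    rw [hAC0]
    apply intervalIntegral.integral_congr
    intro q _
    show -(a q) ⁅u q, e.symm x⁆ = -(a' q) ((β (u' q)) x)
    rw [ha'app, hβapp]
    simp [hu']
  have hmax' : ∀ᵐ t ∂volume, t ∈ I →
      (F' (u' t) = 1 ∧ ∀ v : Fin n → ℝ, F' v = 1 → a' t v ≤ a' t (u' t)) := by
    filter_upwards [hmax] with t hgood htI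
    obtain ⟨h1, h2⟩ := hgood htI
    constructor
    · show F (e.symm (e (u t))) = 1
      rw [e.symm_apply_apply]
      exact h1
    · intro v hv
      rw [ha'app, ha'app]
      have := h2 (e.symm v) hv
      simpa [hu'] using this
  intro t₁ ht₁ t₂ ht₂
  rw [← hFseq t₁, ← hFseq t₂]
  exact aux_const I hI a' u' β hβ F' hF'c hF'0 hF'z hF'h hub' Fstar' hFstar'good
    hAC' hmax' t₁ ht₁ t₂ ht₂
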